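/- For probability-like vectors z, z' with positive entries, the KL divergence D(z', z) = z'·log(z') − z'·log(z) satisfies (z' − z)·∇_{z'} D(z', z) ≥ (1/2)‖z' − z‖², where ∇_{z'} D(z', z) = log(z') − log(z) + 1 (componentwise). -/

import Mathlib

lemma log_key {a b : ℝ} (ha : 0 < a) (hb : 0 < b) (ha1 : a ≤ 1) (hab : b ≤ a) :
    (a - b) * (Real.log a - Real.log b) ≥ (a - b) ^ 2 := by
  have h1 : Real.log b - Real.log a ≤ b / a - 1 := by
    have := Real.log_le_sub_one_of_pos (show 0 < b / a by positivity)
    rwa [Real.log_div (ne_of_gt hb) (ne_of_gt ha)] at this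
  have h2 : Real.log a - Real.log b ≥ (a - b) / a := by
    have : b / a - 1 = -((a - b) / a) := by field_simp; ring
    linarith [h1, this ▸ h1]
  have h3 : (a - b) / a ≥ a - b := by
    rw [ge_iff_le, le_div_iff₀ ha]
    nlinarith
  nlinarith [sub_nonneg.mpr hab]

lemma log_key' {a b : ℝ} (ha : 0 < a) (hb : 0 < b) (ha1 : a ≤ 1) (hb1 : b ≤ 1) :
    (a - b) * (Real.log a - Real.log b) ≥ (a - b) ^ 2 := by
  rcases le_total b a with h | h
  · exact log_key ha hb ha1 h
  · have := log_key hb ha hb1 h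
    nlinarith

/-- For probability-like vectors `z, z'` with positive entries, the KL divergence
`D(z', z) = z'·log z' − z'·log z` satisfies
`(z' − z)·∇_{z'} D(z', z) ≥ (1/2) ‖z' − z‖²`,
where `∇_{z'} D(z', z) = log z' − log z + 1` componentwise. -/
theorem stmt0 (n : ℕ) (z z' : Fin n → ℝ)
    (hz : ∀ i, 0 < z i) (hz' : ∀ i, 0 < z' i)
    (hsz : ∑ i, z i = 1) (hsz' : ∑ i, z' i = 1) :
    ∑ i, (z' i - z i) * (Real.log (z' i) - Real.log (z i) + 1)
      ≥ (1 / 2) * ∑ i, (z' i - z i) ^ 2 := by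
  have hle : ∀ i, z i ≤ 1 := fun i => hsz ▸
    Finset.single_le_sum (fun j _ => (hz j).le) (Finset.mem_univ i)
  have hle' : ∀ i, z' i ≤ 1 := fun i => hsz' ▸
    Finset.single_le_sum (fun j _ => (hz' j).le) (Finset.mem_univ i)
  have key : ∀ i, (z' i - z i) * (Real.log (z' i) - Real.log (z i) + 1)
      ≥ (1 / 2) * (z' i - z i) ^ 2 + (z' i - z i) := by
    intro i
    have := log_key' (hz' i) (hz i) (hle' i) (hle i)
    nlinarith
  calc ∑ i, (z' i - z i) * (Real.log (z' i) - Real.log (z i) + 1)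
      ≥ ∑ i, ((1 / 2) * (z' i - z i) ^ 2 + (z' i - z i)) :=
        Finset.sum_le_sum (fun i _ => key i)
    _ = (1 / 2) * ∑ i, (z' i - z i) ^ 2 := by
        rw [Finset.sum_add_distrib, ← Finset.mul_sum, Finset.sum_sub_distrib, hsz, hsz']
        ring
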